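/- Let X be a metric space, let i : S² → X be a continuous injective map, fix x₀ ∈ S², and let W_d(i) be the associated min-max width. If W_d(i) equals the diameter of the image i(S²) in X, then for every p ∈ S² there exists q ∈ S² such that dist(i(p), i(q)) = diam(i(S²)). -/

import Mathlib

/-- The unit sphere `S²` in three-dimensional Euclidean space. -/
abbrev S2 : Type := Metric.sphere (0 : EuclideanSpace ℝ (Fin 3)) 1

/-- The continuous map `S² → Sym2 S²`, `x ↦ ⟦(φ₁ x, φ₂ x)⟧`. -/
noncomputable def pairMap (φ₁ φ₂ : C(S2, S2)) : C(S2, Sym2 S2) :=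
  ⟨fun x => s(φ₁ x, φ₂ x), continuous_quot_mk.comp (φ₁.continuous.prodMk φ₂.continuous)⟩

/-- The reference map `Φ₀ : S² → Sym2 S²`, `x ↦ ⟦(x, x₀)⟧`. -/
noncomputable def Phi0 (x₀ : S2) : C(S2, Sym2 S2) :=
  pairMap (ContinuousMap.id S2) (ContinuousMap.const S2 x₀)

/-- A sweepout is a pair `(φ₁, φ₂)` of continuous self-maps of `S²` such that
`x ↦ ⟦(φ₁ x, φ₂ x)⟧` is freely homotopic to `Φ₀`. -/
def IsSweepout (x₀ : S2) (φ₁ φ₂ : C(S2, S2)) : Prop :=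
  (pairMap φ₁ φ₂).Homotopic (Phi0 x₀)

/-- The min-max width `W_d(i)`: the infimum over all sweepouts `(φ₁, φ₂)` of
`sup_x dist(i(φ₁ x), i(φ₂ x))`. -/
noncomputable def Wd {X : Type*} [MetricSpace X] (i : C(S2, X)) (x₀ : S2) : ℝ :=
  sInf {r : ℝ | ∃ φ₁ φ₂ : C(S2, S2), IsSweepout x₀ φ₁ φ₂ ∧
    r = ⨆ x : S2, dist (i (φ₁ x)) (i (φ₂ x))}


lemma joined_S2 (p q : S2) : Joined p q := by
  have h : IsPathConnected (Metric.sphere (0 : EuclideanSpace ℝ (Fin 3)) 1) := by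
    apply isPathConnected_sphere ?_ _ zero_le_one
    rw [← Module.finrank_eq_rank, finrank_euclideanSpace_fin]
    norm_num
  exact (h.joinedIn p.1 p.2 q.1 q.2).joined_subtype

lemma sweepout_const (x₀ p : S2) :
    IsSweepout x₀ (ContinuousMap.id S2) (ContinuousMap.const S2 p) := by
  obtain ⟨γ⟩ := joined_S2 p x₀
  exact ⟨{ toFun := fun tx => s(tx.2, γ tx.1)
           continuous_toFun :=
             continuous_quot_mk.comp (continuous_snd.prodMk (γ.continuous.comp continuous_fst))
           map_zero_left := fun x => by simp [pairMap]
           map_one_left := fun x => by simp [Phi0, pairMap] }⟩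

/-- **Reidemeister-type property (Theorem 1.12 (I)).** If the min-max width of a
continuous injective map `i : S² → X` equals the diameter of its image, then every point
of the image is an endpoint of a diameter. -/
theorem stmt_13 {X : Type*} [MetricSpace X] (i : C(S2, X)) (hi : Function.Injective i)
    (x₀ : S2) (hW : Wd i x₀ = Metric.diam (Set.range i)) :
    ∀ p : S2, ∃ q : S2, dist (i p) (i q) = Metric.diam (Set.range i) := by
  intro p
  have hc : Continuous fun x : S2 => dist (i x) (i p) := by continuity
  obtain ⟨q, hq⟩ := hc.exists_forall_ge' p (by simp [Filter.cocompact_eq_bot])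
  refine ⟨q, le_antisymm (Metric.dist_le_diam_of_mem
    (isCompact_range i.continuous).isBounded ⟨p, rfl⟩ ⟨q, rfl⟩) ?_⟩
  rw [← hW]
  have h1 : Wd i x₀ ≤
      ⨆ x : S2, dist (i ((ContinuousMap.id S2) x)) (i ((ContinuousMap.const S2 p) x)) := by
    apply csInf_le
    · refine ⟨0, fun r hr => ?_⟩
      obtain ⟨φ₁, φ₂, -, rfl⟩ := hr
      exact Real.iSup_nonneg fun x => dist_nonneg
    · exact ⟨ContinuousMap.id S2, ContinuousMap.const S2 p, sweepout_const x₀ p, rfl⟩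
  have : Nonempty S2 := ⟨p⟩
  refine h1.trans (ciSup_le fun x => ?_)
  simpa [dist_comm] using hq x
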